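/- Let G = (V, E, L) be a multiplex network, S : ℕ^L → ℝ_{≥0}^d a non-decreasing summarizer, and k ∈ ℝ_{≥0}^d. If two subsets C, C' ⊆ V both satisfy the (k, S)-degree condition, then their union C ∪ C' also satisfies the (k, S)-degree condition. Consequently, there is a unique maximal subset of V satisfying the (k, S)-degree condition (the union of all subsets satisfying it), i.e., the k-S-core of G exists and is unique. -/

import Mathlib

/-- The degree of vertex `v` within the vertex subset `H` in layer `ℓ` of the
multiplex network `G`. -/
def mdeg {V L : Type*} (G : L → SimpleGraph V) [∀ ℓ, DecidableRel (G ℓ).Adj]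
    (H : Finset V) (ℓ : L) (v : V) : ℕ :=
  (H.filter fun u => (G ℓ).Adj v u).card

/-- `C` satisfies the `(k, S)`-degree condition: for every `v ∈ C` and every index `i`,
`S(deg^C(v))_i ≥ k_i`. -/
def SatCond {V L ι α : Type*} [Preorder α] (G : L → SimpleGraph V)
    [∀ ℓ, DecidableRel (G ℓ).Adj]
    (S : (L → ℕ) → ι → α) (k : ι → α) (C : Finset V) : Prop :=
  ∀ v ∈ C, ∀ i, k i ≤ S (fun ℓ => mdeg G C ℓ v) i

lemma mdeg_mono {V L : Type*} (G : L → SimpleGraph V) [∀ ℓ, DecidableRel (G ℓ).Adj]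
    {H H' : Finset V} (h : H ⊆ H') (ℓ : L) (v : V) :
    mdeg G H ℓ v ≤ mdeg G H' ℓ v :=
  Finset.card_le_card (Finset.filter_subset_filter _ h)

lemma satcond_mono {V L ι α : Type*} [Preorder α] (G : L → SimpleGraph V)
    [∀ ℓ, DecidableRel (G ℓ).Adj] {S : (L → ℕ) → ι → α} (hS : Monotone S)
    {k : ι → α} {C C' : Finset V} (hsub : C ⊆ C') (hC : SatCond G S k C)
    (v : V) (hv : v ∈ C) (i : ι) : k i ≤ S (fun ℓ => mdeg G C' ℓ v) i :=
  le_trans (hC v hv i) (hS (fun ℓ => mdeg_mono G hsub ℓ v) i)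

lemma satcond_union {V L ι α : Type*} [Preorder α] [DecidableEq V]
    (G : L → SimpleGraph V) [∀ ℓ, DecidableRel (G ℓ).Adj]
    {S : (L → ℕ) → ι → α} (hS : Monotone S) {k : ι → α} {C C' : Finset V}
    (hC : SatCond G S k C) (hC' : SatCond G S k C') :
    SatCond G S k (C ∪ C') := by
  intro v hv i
  rcases Finset.mem_union.mp hv with h | h
  · exact satcond_mono G hS Finset.subset_union_left hC v h i
  · exact satcond_mono G hS Finset.subset_union_right hC' v h i

theorem union_closed_and_core_exists_unique
    {V L : Type*} {d : ℕ} [Fintype V] [DecidableEq V] [Fintype L] [Nonempty L]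
    (G : L → SimpleGraph V) [∀ ℓ, DecidableRel (G ℓ).Adj]
    (S : (L → ℕ) → Fin d → NNReal) (hS : Monotone S) (k : Fin d → NNReal)
    (C C' : Finset V) (hC : SatCond G S k C) (hC' : SatCond G S k C') :
    SatCond G S k (C ∪ C') ∧
      ∃! Cmax : Finset V, SatCond G S k Cmax ∧ ∀ D : Finset V, SatCond G S k D → D ⊆ Cmax := by
  classical
  refine ⟨satcond_union G hS hC hC', ?_⟩
  set F : Finset (Finset V) := Finset.univ.filter (fun D => SatCond G S k D) with hF
  have hsup : ∀ (F' : Finset (Finset V)), (∀ D ∈ F', SatCond G S k D) →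
      SatCond G S k (F'.sup id) := by
    intro F'
    induction F' using Finset.induction_on with
    | empty => intro _ v hv; simp at hv
    | insert _ _ hnot ih =>
      intro h
      rw [Finset.sup_insert]
      exact satcond_union G hS (h _ (Finset.mem_insert_self _ _))
        (ih fun D hD => h D (Finset.mem_insert_of_mem hD))
  have hFsat : SatCond G S k (F.sup id) :=
    hsup F (fun D hD => (Finset.mem_filter.mp hD).2)
  refine ⟨F.sup id, ⟨hFsat, fun D hD => ?_⟩, ?_⟩
  · exact Finset.le_sup (f := id) (Finset.mem_filter.mpr ⟨Finset.mem_univ _, hD⟩)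
  · rintro X ⟨hX, hXmax⟩
    exact Finset.Subset.antisymm
      (Finset.le_sup (f := id) (Finset.mem_filter.mpr ⟨Finset.mem_univ _, hX⟩))
      (hXmax _ hFsat)
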